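/- Let (X,d) be a metric space with finite upper Minkowski dimension, i.e. there exists k ∈ ℕ such that for every n ∈ ℕ there is a finite subset S_n ⊆ X with |S_n| ≤ k^n and every point of X within distance 2^{-n} of S_n. Let F be a Gaussian free field on X, i.e. a random function F : X → ℝ such that F(x) is a measurable random variable for each x ∈ X and, for all x,y ∈ X, F(x) − F(y) is a centered Gaussian random variable with variance d(x,y). If F is almost surely continuous, then almost surely, for every γ ∈ (0, 1/2), F is Hölder continuous with exponent γ (i.e. there exists C > 0 with |F(x) − F(y)| ≤ C·d(x,y)^γ for all x,y ∈ X). -/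

import Mathlib

open MeasureTheory ProbabilityTheory Set
open Real NNReal Filter Topology
open scoped ENNReal

open MeasureTheory ProbabilityTheory Set Real NNReal

lemma my_gauss_tail (v : ℝ≥0) (hv : v ≠ 0) (n : ℕ) (hn : 1 ≤ n) :
    gaussianReal 0 v (Ici ((n : ℝ) * Real.sqrt v)) ≤ ENNReal.ofReal (Real.exp (-(n : ℝ)^2 / 2)) := by
  have hv' : (0:ℝ) < (v:ℝ) := by
    have := (show (0:ℝ≥0) ≤ v by positivity).lt_of_ne (by exact_mod_cast (Ne.symm hv))
    exact_mod_cast this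
  set s : ℝ := Real.sqrt v with hs_def
  have hs : 0 < s := Real.sqrt_pos.2 hv'
  have hs2 : s ^ 2 = (v:ℝ) := Real.sq_sqrt hv'.le
  have hn' : (0:ℝ) < n := by exact_mod_cast hn
  set t : ℝ := n / s with ht_def
  have ht : 0 < t := div_pos hn' hs
  set a : ℝ := (n : ℝ) * s with ha_def
  -- the exponential moment
  have hmeasf : Measurable fun x : ℝ => ENNReal.ofReal (Real.exp (t * x)) :=
    (Real.continuous_exp.comp (continuous_const.mul continuous_id)).measurable.ennreal_ofReal
  have hpdf_id : ∀ x : ℝ, gaussianPDFReal 0 v x * Real.exp (t * x)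
      = Real.exp (t ^ 2 * v / 2) * gaussianPDFReal (t * v) v x := by
    intro x
    simp only [gaussianPDFReal_def]
    rw [mul_assoc, ← Real.exp_add,
      show Real.exp (t^2 * v / 2) * ((Real.sqrt (2 * π * v))⁻¹ * Real.exp (-(x - t * v)^2/(2 * v)))
        = (Real.sqrt (2 * π * v))⁻¹ * Real.exp (t^2 * v / 2 + -(x - t * v)^2/(2 * v)) from by
        rw [Real.exp_add]; ring]
    congr 1
    field_simp
    ring
  have hmoment : (∫⁻ x, ENNReal.ofReal (Real.exp (t * x)) ∂(gaussianReal 0 v))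
      = ENNReal.ofReal (Real.exp (t ^ 2 * v / 2)) := by
    rw [gaussianReal_of_var_ne_zero 0 hv,
      lintegral_withDensity_eq_lintegral_mul _ (measurable_gaussianPDF 0 v) hmeasf]
    have : ∀ x : ℝ, (gaussianPDF 0 v * fun x => ENNReal.ofReal (Real.exp (t * x))) x
        = ENNReal.ofReal (Real.exp (t ^ 2 * v / 2)) * ENNReal.ofReal (gaussianPDFReal (t * v) v x) := by
      intro x
      simp only [Pi.mul_apply, gaussianPDF_def]
      rw [← ENNReal.ofReal_mul (gaussianPDFReal_nonneg 0 v x), hpdf_id x,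
        ENNReal.ofReal_mul (Real.exp_nonneg _)]
    simp only [this]
    rw [lintegral_const_mul _ (measurable_gaussianPDFReal (t*v) v).ennreal_ofReal,
      lintegral_gaussianPDFReal_eq_one (t*v) hv, mul_one]
  -- Markov
  have hsub : Ici a ⊆ {x : ℝ | ENNReal.ofReal (Real.exp (t * a)) ≤ ENNReal.ofReal (Real.exp (t * x))} := by
    intro x hx
    exact ENNReal.ofReal_le_ofReal (Real.exp_le_exp.2 (mul_le_mul_of_nonneg_left hx ht.le))
  have hmarkov := mul_meas_ge_le_lintegral₀ (μ := gaussianReal 0 v) hmeasf.aemeasurable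
      (ENNReal.ofReal (Real.exp (t * a)))
  have h1 : ENNReal.ofReal (Real.exp (t * a)) * gaussianReal 0 v (Ici a)
      ≤ ENNReal.ofReal (Real.exp (t ^ 2 * v / 2)) := by
    calc ENNReal.ofReal (Real.exp (t * a)) * gaussianReal 0 v (Ici a)
        ≤ ENNReal.ofReal (Real.exp (t * a)) *
          gaussianReal 0 v {x : ℝ | ENNReal.ofReal (Real.exp (t * a)) ≤ ENNReal.ofReal (Real.exp (t * x))} :=
          mul_le_mul_right (measure_mono hsub) _
      _ ≤ _ := by rw [← hmoment]; exact hmarkov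
  have hε0 : ENNReal.ofReal (Real.exp (t * a)) ≠ 0 := by
    simp [ENNReal.ofReal_eq_zero, not_le, Real.exp_pos]
  have hεtop : ENNReal.ofReal (Real.exp (t * a)) ≠ ⊤ := ENNReal.ofReal_ne_top
  have h2 : gaussianReal 0 v (Ici a) ≤ ENNReal.ofReal (Real.exp (t ^ 2 * v / 2)) / ENNReal.ofReal (Real.exp (t * a)) := by
    rw [ENNReal.le_div_iff_mul_le (Or.inl hε0) (Or.inl hεtop), mul_comm]
    exact h1
  refine h2.trans_eq ?_
  rw [← ENNReal.ofReal_div_of_pos (Real.exp_pos _), ← Real.exp_sub]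
  congr 1
  have e1 : t * a = (n:ℝ)^2 := by rw [ht_def, ha_def]; field_simp [hs.ne']
  have e2 : t^2 * (v:ℝ) = (n:ℝ)^2 := by rw [ht_def, ← hs2]; field_simp [hs.ne']
  rw [e1, e2]; ring



lemma my_summable_aux (c : ℝ) (hc : 0 ≤ c) :
    Summable (fun n : ℕ => c ^ n * Real.exp (-(n:ℝ)^2/2)) := by
  refine summable_of_ratio_norm_eventually_le (r := 1/2) (by norm_num) ?_
  have h1 : Tendsto (fun x : ℝ => c * Real.exp (-x - 1/2)) atTop (𝓝 (c * 0)) := by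
    refine Filter.Tendsto.const_mul c (Real.tendsto_exp_atBot.comp ?_)
    have h2 : Tendsto (fun x : ℝ => -x + -(1/2)) atTop atBot :=
      tendsto_atBot_add_const_right atTop (-(1/2)) tendsto_neg_atTop_atBot
    exact h2.congr (fun x => by ring)
  rw [mul_zero] at h1
  have h2 : ∀ᶠ n : ℕ in atTop, c * Real.exp (-(n:ℝ) - 1/2) ≤ 1/2 :=
    (h1.comp tendsto_natCast_atTop_atTop).eventually_le_const (by norm_num)
  filter_upwards [h2] with n hn
  have key : c ^ (n+1) * Real.exp (-((n:ℕ)+1:ℝ)^2/2)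
      = (c * Real.exp (-(n:ℝ) - 1/2)) * (c ^ n * Real.exp (-(n:ℝ)^2/2)) := by
    rw [pow_succ]
    rw [show Real.exp (-((n:ℕ)+1:ℝ)^2/2) = Real.exp (-(n:ℝ) - 1/2) * Real.exp (-(n:ℝ)^2/2) by
      rw [← Real.exp_add]; congr 1; ring]
    ring
  have e1 : (0:ℝ) ≤ c ^ n * Real.exp (-(n:ℝ)^2/2) := by positivity
  rw [Real.norm_eq_abs, Real.norm_eq_abs, abs_of_nonneg (by positivity), abs_of_nonneg e1]
  have : ((n+1:ℕ):ℝ) = (n:ℝ)+1 := by push_cast; ring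
  rw [this, key]
  exact mul_le_mul_of_nonneg_right hn e1


lemma my_pair_tail {Ω : Type*} [MeasurableSpace Ω] (μ : Measure Ω) [IsProbabilityMeasure μ]
    {X : Type*} [MetricSpace X] (F : Ω → X → ℝ)
    (hmeas : ∀ x : X, Measurable fun ω => F ω x)
    (hgauss : ∀ x y : X, Measure.map (fun ω => F ω x - F ω y) μ = gaussianReal 0 (nndist x y))
    (s t : X) (n : ℕ) :
    μ {ω | (n : ℝ) * Real.sqrt (dist s t) < |F ω s - F ω t|}
      ≤ 2 * ENNReal.ofReal (Real.exp (-(n:ℝ)^2/2)) := by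
  rcases eq_or_ne s t with rfl | hst
  · simp
  rcases Nat.eq_zero_or_pos n with rfl | hn
  · calc μ _ ≤ 1 := prob_le_one
      _ ≤ 2 * ENNReal.ofReal (Real.exp (-((0:ℕ):ℝ)^2/2)) := by norm_num
  set a : ℝ := (n : ℝ) * Real.sqrt (dist s t) with ha
  have hsub : {ω | a < |F ω s - F ω t|}
      ⊆ ((fun ω => F ω s - F ω t) ⁻¹' Ici a) ∪ ((fun ω => F ω t - F ω s) ⁻¹' Ici a) := by
    intro ω hω
    have hω' : a < |F ω s - F ω t| := hω
    rcases le_abs.1 (le_of_lt hω') with h | h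
    · exact Or.inl h
    · exact Or.inr (by simpa [neg_sub] using h)
  have hv : nndist s t ≠ 0 := by simpa using hst
  have hv' : nndist t s ≠ 0 := by simpa using (Ne.symm hst)
  have hY : Measurable fun ω => F ω s - F ω t := (hmeas s).sub (hmeas t)
  have hZ : Measurable fun ω => F ω t - F ω s := (hmeas t).sub (hmeas s)
  have h1 : μ ((fun ω => F ω s - F ω t) ⁻¹' Ici a) ≤ ENNReal.ofReal (Real.exp (-(n:ℝ)^2/2)) := by
    rw [← Measure.map_apply hY measurableSet_Ici, hgauss s t]
    have : a = (n : ℝ) * Real.sqrt (nndist s t) := by rw [ha]; norm_num [coe_nndist]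
    rw [this]
    exact my_gauss_tail _ hv n hn
  have h2 : μ ((fun ω => F ω t - F ω s) ⁻¹' Ici a) ≤ ENNReal.ofReal (Real.exp (-(n:ℝ)^2/2)) := by
    rw [← Measure.map_apply hZ measurableSet_Ici, hgauss t s]
    have : a = (n : ℝ) * Real.sqrt (nndist t s) := by
      rw [ha, dist_comm]; norm_num [coe_nndist]
    rw [this]
    exact my_gauss_tail _ hv' n hn
  calc μ {ω | a < |F ω s - F ω t|} ≤ _ := measure_mono hsub
    _ ≤ _ + _ := measure_union_le _ _
    _ ≤ _ + _ := add_le_add h1 h2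
    _ = 2 * ENNReal.ofReal (Real.exp (-(n:ℝ)^2/2)) := (two_mul _).symm


/-- Hölder continuity of a Gaussian free field.  Let `(X,d)` be a metric space of
finite upper Minkowski dimension (witnessed by `k` and the covering condition), and
let `F` be a Gaussian free field on `X`: each `F · x` is measurable and
`F · x − F · y` is a centered Gaussian with variance `d(x,y)`.  If `F` is almost
surely continuous, then almost surely `F` is Hölder continuous with every exponent
`γ ∈ (0, 1/2)`. -/
theorem gaussian_free_field_holder
    (X : Type*) [MetricSpace X] (k : ℕ)
    (hdim : ∀ n : ℕ, ∃ S : Finset X, S.card ≤ k ^ n ∧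
      ∀ x : X, ∃ s ∈ S, dist x s ≤ (2 : ℝ)⁻¹ ^ n)
    (Ω : Type*) [MeasurableSpace Ω] (μ : Measure Ω) [IsProbabilityMeasure μ]
    (F : Ω → X → ℝ)
    (hmeas : ∀ x : X, Measurable fun ω => F ω x)
    (hgauss : ∀ x y : X,
      Measure.map (fun ω => F ω x - F ω y) μ = gaussianReal 0 (nndist x y))
    (hcont : ∀ᵐ ω ∂μ, Continuous (F ω)) :
    ∀ᵐ ω ∂μ, ∀ γ ∈ Ioo (0 : ℝ) (1 / 2), ∃ C : ℝ, 0 < C ∧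
      ∀ x y : X, |F ω x - F ω y| ≤ C * dist x y ^ γ := by
  classical
  rcases isEmpty_or_nonempty X with hX | hX
  · filter_upwards with ω
    exact fun γ hγ => ⟨1, one_pos, fun x => isEmptyElim x⟩
  choose S hcard hcover using hdim
  choose g hgmem hgdist using fun n x => hcover n x
  set T : ℕ → Finset X := fun n => S n ∪ S (n + 1) with hT
  set E : ℕ → Set Ω := fun n => ⋃ s ∈ (T n : Set X), ⋃ t ∈ (T n : Set X),
    {ω | (n : ℝ) * Real.sqrt (dist s t) < |F ω s - F ω t|} with hE
  -- cardinality bound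
  have hcardT : ∀ n, (T n).card ≤ 2 * (k+1) ^ (n+1) := by
    intro n
    calc (T n).card ≤ (S n).card + (S (n+1)).card := Finset.card_union_le _ _
      _ ≤ k ^ n + k ^ (n+1) := add_le_add (hcard n) (hcard (n+1))
      _ ≤ (k+1) ^ (n+1) + (k+1) ^ (n+1) := add_le_add
          ((Nat.pow_le_pow_left (Nat.le_succ k) n).trans
            (Nat.pow_le_pow_right (Nat.succ_pos k) (Nat.le_succ n)))
          (Nat.pow_le_pow_left (Nat.le_succ k) (n+1))
      _ = 2 * (k+1) ^ (n+1) := (two_mul _).symm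
  -- measure bound
  set b : ℕ → ℝ := fun n => ((2 * (k+1) ^ (n+1) : ℕ) : ℝ)^2 * (2 * Real.exp (-(n:ℝ)^2/2)) with hb
  have hbnonneg : ∀ n, 0 ≤ b n := fun n => by positivity
  have hEbound : ∀ n, μ (E n) ≤ ENNReal.ofReal (b n) := by
    intro n
    have h1 : μ (E n) ≤ ∑ s ∈ T n, ∑ t ∈ T n, 2 * ENNReal.ofReal (Real.exp (-(n:ℝ)^2/2)) := by
      refine (measure_biUnion_finset_le _ _).trans (Finset.sum_le_sum fun s _ => ?_)
      exact (measure_biUnion_finset_le _ _).trans (Finset.sum_le_sum fun t _ =>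
        my_pair_tail μ F hmeas hgauss s t n)
    have h2 : (∑ s ∈ T n, ∑ t ∈ T n, 2 * ENNReal.ofReal (Real.exp (-(n:ℝ)^2/2)))
        = ((T n).card : ℝ≥0∞) * (((T n).card : ℝ≥0∞) * (2 * ENNReal.ofReal (Real.exp (-(n:ℝ)^2/2)))) := by
      simp [Finset.sum_const, mul_comm]
    refine h1.trans ?_
    rw [h2, hb]
    have hc : ((T n).card : ℝ≥0∞) ≤ ((2 * (k+1) ^ (n+1) : ℕ) : ℝ≥0∞) := by
      exact_mod_cast hcardT n
    calc ((T n).card : ℝ≥0∞) * (((T n).card : ℝ≥0∞) * (2 * ENNReal.ofReal (Real.exp (-(n:ℝ)^2/2))))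
        ≤ ((2 * (k+1) ^ (n+1) : ℕ) : ℝ≥0∞) * (((2 * (k+1) ^ (n+1) : ℕ) : ℝ≥0∞) *
          (2 * ENNReal.ofReal (Real.exp (-(n:ℝ)^2/2)))) :=
          mul_le_mul' hc (mul_le_mul' hc le_rfl)
      _ = ENNReal.ofReal (((2 * (k+1) ^ (n+1) : ℕ) : ℝ)^2 * (2 * Real.exp (-(n:ℝ)^2/2))) := by
          rw [ENNReal.ofReal_mul (by positivity), ENNReal.ofReal_mul (by norm_num),
            ENNReal.ofReal_pow (by positivity)]
          rw [ENNReal.ofReal_natCast, ENNReal.ofReal_ofNat]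
          ring
  have hbsum : Summable b := by
    have h1 : Summable (fun n : ℕ => (((k:ℝ)+1)^2) ^ n * Real.exp (-(n:ℝ)^2/2)) :=
      my_summable_aux _ (by positivity)
    have h2 := (h1.mul_left ((2:ℝ)^2 * (((k:ℝ)+1)^2) * 2))
    refine h2.congr fun n => ?_
    rw [hb]
    push_cast
    rw [mul_pow, ← pow_mul, ← pow_mul]
    ring
  have hsumE : (∑' n, μ (E n)) ≠ ⊤ := by
    refine ne_top_of_le_ne_top ?_ (ENNReal.tsum_le_tsum hEbound)
    rw [← ENNReal.ofReal_tsum_of_nonneg hbnonneg hbsum]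
    exact ENNReal.ofReal_ne_top
  have hBC : ∀ᵐ ω ∂μ, ∀ᶠ n in atTop, ω ∉ E n := ae_eventually_notMem hsumE
  filter_upwards [hBC, hcont] with ω hω hFcont
  -- deterministic part
  obtain ⟨N₀, hN₀⟩ := eventually_atTop.1 hω
  set N : ℕ := max N₀ 1 with hN
  have hgood : ∀ n, N ≤ n → ∀ s ∈ T n, ∀ t ∈ T n,
      |F ω s - F ω t| ≤ (n:ℝ) * Real.sqrt (dist s t) := by
    intro n hn s hs t ht
    by_contra h
    push_neg at h
    refine hN₀ n (le_trans (le_max_left _ _) hn) ?_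
    rw [hE]
    exact Set.mem_biUnion hs (Set.mem_biUnion ht h)
  intro γ hγ
  obtain ⟨hγ0, hγ2⟩ := hγ
  -- constants
  set ρ : ℝ := (2:ℝ)⁻¹ ^ γ with hρ
  have hρ0 : 0 < ρ := Real.rpow_pos_of_pos (by norm_num) γ
  have hρ1 : ρ < 1 := Real.rpow_lt_one (by norm_num) (by norm_num) hγ0
  set r : ℝ := Real.sqrt 2⁻¹ with hr
  have hr0 : 0 < r := Real.sqrt_pos.2 (by norm_num)
  have hrρ : r < ρ := by
    rw [hr, Real.sqrt_eq_rpow, hρ]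
    exact Real.rpow_lt_rpow_of_exponent_gt (by norm_num) (by norm_num) hγ2
  have hr1 : r < 1 := hrρ.trans hρ1
  set q : ℝ := r / ρ with hq
  have hq0 : 0 ≤ q := div_nonneg hr0.le hρ0.le
  have hq1 : q < 1 := (div_lt_one hρ0).2 hrρ
  have hqsum : Summable (fun j : ℕ => ((j:ℝ)+1) * q^j) := by
    have h1 : Summable (fun j : ℕ => (j:ℝ) * q^j) := by
      have := summable_pow_mul_geometric_of_norm_lt_one (R := ℝ) 1
        (by rw [Real.norm_eq_abs, abs_of_nonneg hq0]; exact hq1)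
      simpa using this
    have h2 : Summable (fun j : ℕ => q^j) := summable_geometric_of_lt_one hq0 hq1
    exact (h1.add h2).congr fun j => by ring
  set c₁ : ℝ := ∑' j : ℕ, ((j:ℝ)+1) * q^j with hc₁
  have hc₁0 : 0 ≤ c₁ := tsum_nonneg fun j => by positivity
  have hkey : ∀ j : ℕ, ((j:ℝ)+1) * r^j ≤ c₁ * ρ^j := by
    intro j
    have hle : ((j:ℝ)+1) * q^j ≤ c₁ := Summable.le_tsum hqsum j (fun i _ => by positivity)
    have : ((j:ℝ)+1) * r^j = (((j:ℝ)+1) * q^j) * ρ^j := by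
      rw [hq, div_pow]
      field_simp
    rw [this]
    exact mul_le_mul_of_nonneg_right hle (pow_nonneg hρ0.le j)
  set D : ℝ := Real.sqrt 2 * c₁ with hD
  have hD0 : 0 ≤ D := mul_nonneg (Real.sqrt_nonneg 2) hc₁0
  set T0 : ℝ := D * (1-ρ)⁻¹ with hT0
  have hT00 : 0 ≤ T0 := mul_nonneg hD0 (inv_nonneg.2 (by linarith))
  -- sqrt of powers
  have hsqrtpow : ∀ n : ℕ, Real.sqrt ((2:ℝ)⁻¹ ^ n) = r ^ n := by
    intro n
    have : (r ^ n)^2 = (2:ℝ)⁻¹ ^ n := by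
      rw [← pow_mul, mul_comm, pow_mul, hr, Real.sq_sqrt (by norm_num : (0:ℝ) ≤ 2⁻¹)]
    rw [← this, Real.sqrt_sq (pow_nonneg hr0.le n)]
  -- step bound
  have hstep : ∀ n, N ≤ n → ∀ x : X, |F ω (g n x) - F ω (g (n+1) x)| ≤ D * ρ^n := by
    intro n hn x
    have h1 : |F ω (g n x) - F ω (g (n+1) x)| ≤ (n:ℝ) * Real.sqrt (dist (g n x) (g (n+1) x)) :=
      hgood n hn _ (Finset.mem_union_left _ (hgmem n x)) _ (Finset.mem_union_right _ (hgmem (n+1) x))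
    have hd : dist (g n x) (g (n+1) x) ≤ 2 * (2:ℝ)⁻¹ ^ n := by
      have t1 := hgdist n x
      have t2 := hgdist (n+1) x
      have t3 : dist (g n x) (g (n+1) x) ≤ dist x (g n x) + dist x (g (n+1) x) := by
        rw [dist_comm x (g n x)]
        exact dist_triangle _ _ _
      have t4 : (2:ℝ)⁻¹ ^ (n+1) ≤ (2:ℝ)⁻¹ ^ n :=
        pow_le_pow_of_le_one (by norm_num) (by norm_num) (Nat.le_succ n)
      linarith
    have hsq : Real.sqrt (dist (g n x) (g (n+1) x)) ≤ Real.sqrt 2 * r^n := by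
      have : Real.sqrt (2 * (2:ℝ)⁻¹ ^ n) = Real.sqrt 2 * r^n := by
        rw [Real.sqrt_mul (by norm_num : (0:ℝ) ≤ 2), hsqrtpow n]
      rw [← this]
      exact Real.sqrt_le_sqrt hd
    calc |F ω (g n x) - F ω (g (n+1) x)| ≤ (n:ℝ) * (Real.sqrt 2 * r^n) :=
          h1.trans (mul_le_mul_of_nonneg_left hsq (Nat.cast_nonneg n))
      _ ≤ Real.sqrt 2 * (((n:ℝ)+1) * r^n) := by
          have : (0:ℝ) ≤ r ^ n := pow_nonneg hr0.le n
          nlinarith [Real.sqrt_nonneg (2:ℝ)]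
      _ ≤ Real.sqrt 2 * (c₁ * ρ^n) :=
          mul_le_mul_of_nonneg_left (hkey n) (Real.sqrt_nonneg 2)
      _ = D * ρ^n := by rw [hD]; ring
  -- convergence of nets
  have htendsto : ∀ x : X, Tendsto (fun n => g n x) atTop (𝓝 x) := by
    intro x
    rw [tendsto_iff_dist_tendsto_zero]
    refine squeeze_zero (g := fun n => (2:ℝ)⁻¹ ^ n) (fun n => dist_nonneg) (fun n => ?_) ?_
    · rw [dist_comm]; exact hgdist n x
    · exact tendsto_pow_atTop_nhds_zero_of_lt_one (by norm_num) (by norm_num)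
  -- tail bound
  have htail : ∀ m, N ≤ m → ∀ x : X, |F ω x - F ω (g m x)| ≤ T0 * ρ^m := by
    intro m hm x
    have hpart : ∀ p : ℕ, |F ω (g m x) - F ω (g (m+p) x)| ≤ D * ρ^m * (1-ρ)⁻¹ := by
      intro p
      have hsum : |F ω (g m x) - F ω (g (m+p) x)| ≤ ∑ i ∈ Finset.range p, D * ρ^(m+i) := by
        induction p with
        | zero => simp
        | succ p ih =>
          calc |F ω (g m x) - F ω (g (m+(p+1)) x)|
              ≤ |F ω (g m x) - F ω (g (m+p) x)| + |F ω (g (m+p) x) - F ω (g (m+p+1) x)| := by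
                rw [show m+(p+1) = (m+p)+1 from rfl]
                exact abs_sub_le _ _ _
            _ ≤ (∑ i ∈ Finset.range p, D * ρ^(m+i)) + D * ρ^(m+p) :=
                add_le_add ih (hstep (m+p) (hm.trans (Nat.le_add_right m p)) x)
            _ = ∑ i ∈ Finset.range (p+1), D * ρ^(m+i) := (Finset.sum_range_succ _ p).symm
      refine hsum.trans ?_
      have e1 : (∑ i ∈ Finset.range p, D * ρ^(m+i)) = D * ρ^m * ∑ i ∈ Finset.range p, ρ^i := by
        rw [Finset.mul_sum]
        refine Finset.sum_congr rfl fun i _ => ?_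
        rw [pow_add]; ring
      rw [e1]
      refine mul_le_mul_of_nonneg_left ?_ (by positivity)
      refine (Summable.sum_le_tsum _ (fun i _ => by positivity)
        (summable_geometric_of_lt_one hρ0.le hρ1)).trans_eq ?_
      exact tsum_geometric_of_lt_one hρ0.le hρ1
    have h1 : Tendsto (fun p : ℕ => g (m + p) x) atTop (𝓝 x) :=
      (((htendsto x).comp (tendsto_add_atTop_nat m)).congr (fun p => by
        simp [Nat.add_comm]))
    have h2 : Tendsto (fun p : ℕ => F ω (g (m+p) x)) atTop (𝓝 (F ω x)) :=
      ((hFcont.tendsto x).comp h1)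
    have h3 : Tendsto (fun p : ℕ => |F ω (g m x) - F ω (g (m+p) x)|) atTop
        (𝓝 |F ω (g m x) - F ω x|) := (tendsto_const_nhds.sub h2).abs
    have h4 := le_of_tendsto h3 (Filter.Eventually.of_forall hpart)
    rw [abs_sub_comm]
    rw [hT0]
    calc |F ω (g m x) - F ω x| ≤ D * ρ^m * (1-ρ)⁻¹ := h4
      _ = D * (1-ρ)⁻¹ * ρ^m := by ring
  -- main per-scale estimate
  have hmain : ∀ m, N ≤ m → ∀ x y : X,
      |F ω x - F ω y| ≤ 2 * T0 * ρ^m + (m:ℝ) * Real.sqrt (dist x y + 2 * (2:ℝ)⁻¹ ^ m) := by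
    intro m hm x y
    have hmid : |F ω (g m x) - F ω (g m y)| ≤ (m:ℝ) * Real.sqrt (dist (g m x) (g m y)) :=
      hgood m hm _ (Finset.mem_union_left _ (hgmem m x)) _ (Finset.mem_union_left _ (hgmem m y))
    have hd : dist (g m x) (g m y) ≤ dist x y + 2 * (2:ℝ)⁻¹ ^ m := by
      have t1 := hgdist m x
      have t2 := hgdist m y
      have t3 : dist (g m x) (g m y) ≤ dist (g m x) x + dist x y + dist y (g m y) :=
        dist_triangle4 _ _ _ _
      rw [dist_comm (g m x) x] at t3
      linarith
    have hmid' : |F ω (g m x) - F ω (g m y)| ≤ (m:ℝ) * Real.sqrt (dist x y + 2 * (2:ℝ)⁻¹ ^ m) :=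
      hmid.trans (mul_le_mul_of_nonneg_left (Real.sqrt_le_sqrt hd) (Nat.cast_nonneg m))
    have e1 : |F ω x - F ω y| ≤ |F ω x - F ω (g m x)| + |F ω (g m x) - F ω (g m y)|
        + |F ω (g m y) - F ω y| := by
      calc |F ω x - F ω y| ≤ |F ω x - F ω (g m y)| + |F ω (g m y) - F ω y| := abs_sub_le _ _ _
        _ ≤ (|F ω x - F ω (g m x)| + |F ω (g m x) - F ω (g m y)|) + |F ω (g m y) - F ω y| :=
            add_le_add_left (abs_sub_le _ _ _) _
    have e2 := htail m hm x
    have e3 := htail m hm y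
    rw [abs_sub_comm (F ω (g m y)) (F ω y)] at e1
    linarith
  -- diameter bound
  have hdiam : ∀ x y : X, dist x y ≤ 2 := by
    intro x y
    obtain ⟨s, hs, hds⟩ := hcover 0 x
    obtain ⟨t, ht, hdt⟩ := hcover 0 y
    have hst : s = t := by
      have h1 : (S 0).card ≤ 1 := by simpa using hcard 0
      exact Finset.card_le_one.1 h1 s hs t ht
    have h2 : dist x y ≤ dist x s + dist y t := by
      rw [hst]
      calc dist x y ≤ dist x t + dist t y := dist_triangle _ _ _
        _ = dist x t + dist y t := by rw [dist_comm t y]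
    simp only [pow_zero] at hds hdt
    linarith
  -- rpow of powers
  have hpowγ : ∀ j : ℕ, ((2:ℝ)⁻¹ ^ j : ℝ) ^ γ = ρ ^ j := by
    intro j
    rw [← Real.rpow_natCast ((2:ℝ)⁻¹) j, ← Real.rpow_mul (by norm_num), mul_comm,
      Real.rpow_mul (by norm_num), Real.rpow_natCast]
  -- final constant
  set C1 : ℝ := 2*T0 + 2*Real.sqrt 3 * N with hC1
  set C2 : ℝ := (2*T0 + Real.sqrt 3 * c₁) / ρ with hC2
  set C : ℝ := max C1 C2 + 1 with hC
  have hC1' : 0 ≤ C1 := by positivity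
  have hCpos : 0 < C := by
    have : (0:ℝ) ≤ max C1 C2 := le_trans hC1' (le_max_left _ _)
    linarith
  refine ⟨C, hCpos, ?_⟩
  intro x y
  have hdγ : 0 ≤ dist x y ^ γ := Real.rpow_nonneg dist_nonneg γ
  rcases eq_or_lt_of_le (dist_nonneg : (0:ℝ) ≤ dist x y) with hd0 | hd0
  · -- dist = 0
    have hxy : x = y := dist_eq_zero.1 hd0.symm
    rw [hxy, sub_self, abs_zero]
    positivity
  -- dist > 0
  rcases le_or_gt ((2:ℝ)⁻¹ ^ N) (dist x y) with hcase | hcase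
  · -- large distance: use scale N
    have h1 := hmain N le_rfl x y
    have hle3 : dist x y + 2 * (2:ℝ)⁻¹ ^ N ≤ 3 * dist x y := by linarith
    have h2 : Real.sqrt (dist x y + 2 * (2:ℝ)⁻¹ ^ N) ≤ Real.sqrt 3 * Real.sqrt (dist x y) := by
      rw [← Real.sqrt_mul (by norm_num : (0:ℝ) ≤ 3)]
      exact Real.sqrt_le_sqrt hle3
    have h3 : Real.sqrt (dist x y) ≤ 2 * dist x y ^ γ := by
      rw [Real.sqrt_eq_rpow]
      have e1 : dist x y ^ (1/(2:ℝ)) = dist x y ^ γ * dist x y ^ (1/2 - γ) := by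
        rw [← Real.rpow_add hd0]; norm_num
      rw [e1]
      have e2 : dist x y ^ (1/2 - γ) ≤ 2 := by
        rcases le_or_gt (dist x y) 1 with hle | hlt
        · exact (Real.rpow_le_one hd0.le hle (by linarith)).trans (by norm_num)
        · calc dist x y ^ (1/2 - γ) ≤ dist x y ^ (1:ℝ) :=
              Real.rpow_le_rpow_of_exponent_le hlt.le (by linarith)
            _ = dist x y := Real.rpow_one _
            _ ≤ 2 := hdiam x y
      calc dist x y ^ γ * dist x y ^ (1/2 - γ) ≤ dist x y ^ γ * 2 :=
          mul_le_mul_of_nonneg_left e2 hdγ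
        _ = 2 * dist x y ^ γ := by ring
    have h4 : ρ ^ N ≤ dist x y ^ γ := by
      rw [← hpowγ N]
      exact Real.rpow_le_rpow (by positivity) hcase hγ0.le
    have h5 : (N:ℝ) * Real.sqrt (dist x y + 2 * (2:ℝ)⁻¹ ^ N)
        ≤ (N:ℝ) * (Real.sqrt 3 * (2 * dist x y ^ γ)) := by
      refine mul_le_mul_of_nonneg_left ?_ (Nat.cast_nonneg N)
      exact h2.trans (mul_le_mul_of_nonneg_left h3 (Real.sqrt_nonneg 3))
    have h6 : |F ω x - F ω y| ≤ C1 * dist x y ^ γ := by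
      rw [hC1]
      have h7 : 2 * T0 * ρ ^ N ≤ 2 * T0 * dist x y ^ γ :=
        mul_le_mul_of_nonneg_left h4 (by linarith)
      calc |F ω x - F ω y| ≤ 2 * T0 * ρ^N + (N:ℝ) * Real.sqrt (dist x y + 2 * (2:ℝ)⁻¹ ^ N) := h1
        _ ≤ 2 * T0 * dist x y ^ γ + (N:ℝ) * (Real.sqrt 3 * (2 * dist x y ^ γ)) :=
            add_le_add h7 h5
        _ = (2*T0 + 2*Real.sqrt 3 * N) * dist x y ^ γ := by ring
    refine h6.trans (mul_le_mul_of_nonneg_right ?_ hdγ)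
    rw [hC]
    have := le_max_left C1 C2
    linarith
  · -- small distance
    have hP : ∃ n : ℕ, (2:ℝ)⁻¹ ^ n ≤ dist x y := by
      obtain ⟨n, hn⟩ := exists_pow_lt_of_lt_one hd0 (by norm_num : (2:ℝ)⁻¹ < 1)
      exact ⟨n, hn.le⟩
    set m₀ : ℕ := Nat.find hP with hm₀def
    have hm₀spec : (2:ℝ)⁻¹ ^ m₀ ≤ dist x y := Nat.find_spec hP
    have hm₀N : N + 1 ≤ m₀ := by
      by_contra hcon
      push_neg at hcon
      have h1 : (2:ℝ)⁻¹ ^ N ≤ (2:ℝ)⁻¹ ^ m₀ :=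
        pow_le_pow_of_le_one (by norm_num) (by norm_num) (Nat.lt_succ_iff.1 hcon)
      linarith
    set m : ℕ := m₀ - 1 with hm
    have hmsucc : m + 1 = m₀ := Nat.succ_pred_eq_of_pos (lt_of_lt_of_le (Nat.succ_pos N) hm₀N)
    have hmN : N ≤ m := by
      have h := hm₀N
      rw [← hmsucc] at h
      exact Nat.succ_le_succ_iff.1 h
    have hlow : (2:ℝ)⁻¹ ^ (m+1) ≤ dist x y := by rw [hmsucc]; exact hm₀spec
    have hhigh : dist x y < (2:ℝ)⁻¹ ^ m := by
      have hlt : m < m₀ := by rw [← hmsucc]; exact Nat.lt_succ_self m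
      have := Nat.find_min hP hlt
      push_neg at this
      exact this
    have h1 := hmain m hmN x y
    have h2 : Real.sqrt (dist x y + 2 * (2:ℝ)⁻¹ ^ m) ≤ Real.sqrt 3 * r ^ m := by
      have e1 : Real.sqrt (3 * (2:ℝ)⁻¹ ^ m) = Real.sqrt 3 * r ^ m := by
        rw [Real.sqrt_mul (by norm_num : (0:ℝ) ≤ 3), hsqrtpow m]
      rw [← e1]
      exact Real.sqrt_le_sqrt (by linarith)
    have h3 : (m:ℝ) * (Real.sqrt 3 * r^m) ≤ Real.sqrt 3 * (c₁ * ρ^m) := by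
      have e1 : (m:ℝ) * (Real.sqrt 3 * r^m) = Real.sqrt 3 * ((m:ℝ) * r^m) := by ring
      rw [e1]
      refine mul_le_mul_of_nonneg_left ?_ (Real.sqrt_nonneg 3)
      have : (m:ℝ) * r^m ≤ ((m:ℝ)+1) * r^m :=
        mul_le_mul_of_nonneg_right (by linarith) (pow_nonneg hr0.le m)
      exact this.trans (hkey m)
    have h4 : |F ω x - F ω y| ≤ (2*T0 + Real.sqrt 3 * c₁) * ρ^m := by
      have h5 : (m:ℝ) * Real.sqrt (dist x y + 2 * (2:ℝ)⁻¹ ^ m) ≤ Real.sqrt 3 * (c₁ * ρ^m) := by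
        refine le_trans ?_ h3
        exact mul_le_mul_of_nonneg_left h2 (Nat.cast_nonneg m)
      calc |F ω x - F ω y| ≤ 2 * T0 * ρ^m + (m:ℝ) * Real.sqrt (dist x y + 2 * (2:ℝ)⁻¹ ^ m) := h1
        _ ≤ 2 * T0 * ρ^m + Real.sqrt 3 * (c₁ * ρ^m) := add_le_add_right h5 _
        _ = (2*T0 + Real.sqrt 3 * c₁) * ρ^m := by ring
    have h6 : (2*T0 + Real.sqrt 3 * c₁) * ρ^m = C2 * ρ^(m+1) := by
      rw [hC2, pow_succ]
      field_simp
    have h7 : ρ^(m+1) ≤ dist x y ^ γ := by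
      rw [← hpowγ (m+1)]
      exact Real.rpow_le_rpow (by positivity) hlow hγ0.le
    have hC20 : 0 ≤ C2 := by
      rw [hC2]
      positivity
    have h8 : |F ω x - F ω y| ≤ C2 * dist x y ^ γ :=
      (h4.trans_eq h6).trans (mul_le_mul_of_nonneg_left h7 hC20)
    refine h8.trans (mul_le_mul_of_nonneg_right ?_ hdγ)
    rw [hC]
    have := le_max_right C1 C2
    linarith
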